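/- Suppose for every t ≥ 1 the two Loewner inequalities (F_t − I) R_t⁻¹ (F_t − I) ≼ (L_t P_{t−1} L_tᵀ + R_t)⁻¹ and G_tᵀ P_{t−1}⁻¹ G_t ≼ P_{t−1}⁻¹ hold. Then the Lyapunov sequence V_t := θ̃_tᵀ P_t⁻¹ θ̃_t is nonincreasing in t, and moreover if there is β > 0 with P_t ≼ β·I for all t, then ‖θ̃_t‖² ≤ β V_0 for every t. -/

import Mathlib

open Matrix

lemma dot_shift {n m : ℕ} (A : Matrix (Fin n) (Fin m) ℝ) (x : Fin n → ℝ) (y : Fin m → ℝ) :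
    x ⬝ᵥ (A *ᵥ y) = (Aᵀ *ᵥ x) ⬝ᵥ y := by
  rw [Matrix.dotProduct_mulVec, Matrix.mulVec_transpose]

lemma dot_shift' {n m : ℕ} (A : Matrix (Fin n) (Fin m) ℝ) (x : Fin m → ℝ) (y : Fin n → ℝ) :
    (A *ᵥ x) ⬝ᵥ y = x ⬝ᵥ (Aᵀ *ᵥ y) := by
  rw [dot_shift, transpose_transpose]

lemma psd_apply {n : ℕ} {M : Matrix (Fin n) (Fin n) ℝ} (h : M.PosSemidef) (x : Fin n → ℝ) :
    0 ≤ x ⬝ᵥ (M *ᵥ x) := by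
  simpa using h.dotProduct_mulVec_nonneg x

lemma ekf_key {p r : ℕ}
    (Rm : Matrix (Fin r) (Fin r) ℝ) (Lm : Matrix (Fin r) (Fin p) ℝ)
    (Pm P' : Matrix (Fin p) (Fin p) ℝ)
    (hPmdet : IsUnit Pm.det) (hP'det : IsUnit P'.det)
    (hPinv : P'⁻¹ = Pm⁻¹ + Lmᵀ * Rm⁻¹ * Lm) :
    P' * (Lmᵀ * Rm⁻¹ * Lm) * Pm = Pm - P' := by
  have h1 : P' * P'⁻¹ = 1 := Matrix.mul_nonsing_inv _ hP'det
  rw [hPinv, Matrix.mul_add] at h1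
  have h2 := congrArg (fun X => X * Pm) h1
  simp only [Matrix.add_mul, Matrix.one_mul, Matrix.mul_assoc,
    Matrix.nonsing_inv_mul _ hPmdet, Matrix.mul_one] at h2
  have := eq_sub_of_add_eq' h2
  simpa only [Matrix.mul_assoc] using this

lemma ekf_woodbury {p r : ℕ}
    (Rm : Matrix (Fin r) (Fin r) ℝ) (Lm : Matrix (Fin r) (Fin p) ℝ)
    (Pm P' : Matrix (Fin p) (Fin p) ℝ)
    (hRdet : IsUnit Rm.det)
    (hPmdet : IsUnit Pm.det) (hP'det : IsUnit P'.det)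
    (hPinv : P'⁻¹ = Pm⁻¹ + Lmᵀ * Rm⁻¹ * Lm) :
    (Lm * Pm * Lmᵀ + Rm)⁻¹ = Rm⁻¹ - Rm⁻¹ * (Lm * P' * Lmᵀ) * Rm⁻¹ := by
  apply Matrix.inv_eq_left_inv
  have key := ekf_key Rm Lm Pm P' hPmdet hP'det hPinv
  have key2 : Rm⁻¹ * (Lm * (P' * (Lmᵀ * (Rm⁻¹ * (Lm * (Pm * Lmᵀ)))))) =
      Rm⁻¹ * (Lm * (Pm * Lmᵀ)) - Rm⁻¹ * (Lm * (P' * Lmᵀ)) := by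
    have h := congrArg (fun X => Rm⁻¹ * (Lm * (X * Lmᵀ))) key
    simp only [Matrix.mul_assoc, Matrix.sub_mul, Matrix.mul_sub] at h ⊢
    exact h
  have hRiR : Rm⁻¹ * Rm = 1 := Matrix.nonsing_inv_mul _ hRdet
  simp only [Matrix.sub_mul, Matrix.mul_add, Matrix.mul_assoc, hRiR, Matrix.mul_one]
  rw [key2]
  abel

lemma ekf_step {p r : ℕ}
    (Rm : Matrix (Fin r) (Fin r) ℝ) (Lm : Matrix (Fin r) (Fin p) ℝ)
    (Fm : Matrix (Fin r) (Fin r) ℝ) (Gm : Matrix (Fin p) (Fin p) ℝ)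
    (Pm P' : Matrix (Fin p) (Fin p) ℝ)
    (hR : Rm.PosDef) (hRs : Rm.IsSymm) (hFs : Fm.IsSymm)
    (hPm : Pm.PosDef) (hP' : P'.PosDef)
    (hPinv : P'⁻¹ = Pm⁻¹ + Lmᵀ * Rm⁻¹ * Lm)
    (θ0 θ1 : Fin p → ℝ) (em : Fin r → ℝ)
    (hθ : θ1 = Gm *ᵥ θ0 - (P' * Lmᵀ * Rm⁻¹) *ᵥ em)
    (hFe : Fm *ᵥ em = Lm *ᵥ (Gm *ᵥ θ0))
    (hL1 : ((Lm * Pm * Lmᵀ + Rm)⁻¹ - (Fm - 1) * Rm⁻¹ * (Fm - 1)).PosSemidef)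
    (hL2 : (Pm⁻¹ - Gmᵀ * Pm⁻¹ * Gm).PosSemidef) :
    θ1 ⬝ᵥ (P'⁻¹ *ᵥ θ1) ≤ θ0 ⬝ᵥ (Pm⁻¹ *ᵥ θ0) := by
  have hRdet : IsUnit Rm.det := hR.det_pos.ne'.isUnit
  have hPmdet : IsUnit Pm.det := hPm.det_pos.ne'.isUnit
  have hP'det : IsUnit P'.det := hP'.det_pos.ne'.isUnit
  have hP's : P'ᵀ = P' := by
    rw [← conjTranspose_eq_transpose_of_trivial]; exact hP'.isHermitian
  have hRis : (Rm⁻¹)ᵀ = Rm⁻¹ := by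
    rw [Matrix.transpose_nonsing_inv, hRs.eq]
  have hFs' : Fmᵀ = Fm := hFs.eq
  have hθ1 : θ1 = Gm *ᵥ θ0 - P' *ᵥ (Lmᵀ *ᵥ (Rm⁻¹ *ᵥ em)) := by
    rw [hθ]; congr 1; rw [Matrix.mulVec_mulVec, Matrix.mulVec_mulVec]
  have hiP' : P'⁻¹ * P' = 1 := Matrix.nonsing_inv_mul _ hP'det
  have hP'i : P' * P'⁻¹ = 1 := Matrix.mul_nonsing_inv _ hP'det
  have h2 : P'⁻¹ *ᵥ θ1 = P'⁻¹ *ᵥ (Gm *ᵥ θ0) - Lmᵀ *ᵥ (Rm⁻¹ *ᵥ em) := by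
    rw [hθ1, Matrix.mulVec_sub]
    congr 1
    rw [Matrix.mulVec_mulVec, hiP', Matrix.one_mulVec]
  have hT1 : (Gm *ᵥ θ0) ⬝ᵥ (P'⁻¹ *ᵥ (Gm *ᵥ θ0)) =
      (Gm *ᵥ θ0) ⬝ᵥ (Pm⁻¹ *ᵥ (Gm *ᵥ θ0)) + (Fm *ᵥ em) ⬝ᵥ (Rm⁻¹ *ᵥ (Fm *ᵥ em)) := by
    rw [hPinv, Matrix.add_mulVec, dotProduct_add]
    congr 1
    rw [← Matrix.mulVec_mulVec, ← Matrix.mulVec_mulVec, dot_shift, transpose_transpose, ← hFe]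
  have hT2 : (Gm *ᵥ θ0) ⬝ᵥ (Lmᵀ *ᵥ (Rm⁻¹ *ᵥ em)) = (Fm *ᵥ em) ⬝ᵥ (Rm⁻¹ *ᵥ em) := by
    rw [dot_shift, transpose_transpose, ← hFe]
  have hPP : P' *ᵥ (P'⁻¹ *ᵥ (Gm *ᵥ θ0)) = Gm *ᵥ θ0 := by
    rw [Matrix.mulVec_mulVec, hP'i, Matrix.one_mulVec]
  have hT3 : (P' *ᵥ (Lmᵀ *ᵥ (Rm⁻¹ *ᵥ em))) ⬝ᵥ (P'⁻¹ *ᵥ (Gm *ᵥ θ0)) =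
      (Fm *ᵥ em) ⬝ᵥ (Rm⁻¹ *ᵥ em) := by
    calc (P' *ᵥ (Lmᵀ *ᵥ (Rm⁻¹ *ᵥ em))) ⬝ᵥ (P'⁻¹ *ᵥ (Gm *ᵥ θ0))
        = (Lmᵀ *ᵥ (Rm⁻¹ *ᵥ em)) ⬝ᵥ (P'ᵀ *ᵥ (P'⁻¹ *ᵥ (Gm *ᵥ θ0))) := dot_shift' _ _ _
      _ = (Gm *ᵥ θ0) ⬝ᵥ (Lmᵀ *ᵥ (Rm⁻¹ *ᵥ em)) := by rw [hP's, hPP, dotProduct_comm]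
      _ = (Fm *ᵥ em) ⬝ᵥ (Rm⁻¹ *ᵥ em) := hT2
  have hW := ekf_woodbury Rm Lm Pm P' hRdet hPmdet hP'det hPinv
  have hX : Rm⁻¹ * Lm * P' * Lmᵀ * Rm⁻¹ = Rm⁻¹ - (Lm * Pm * Lmᵀ + Rm)⁻¹ := by
    rw [hW]
    simp only [Matrix.mul_assoc]
    abel
  have hT4 : (P' *ᵥ (Lmᵀ *ᵥ (Rm⁻¹ *ᵥ em))) ⬝ᵥ (Lmᵀ *ᵥ (Rm⁻¹ *ᵥ em)) =
      em ⬝ᵥ (Rm⁻¹ *ᵥ em) - em ⬝ᵥ ((Lm * Pm * Lmᵀ + Rm)⁻¹ *ᵥ em) := by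
    have e1 : (P' *ᵥ (Lmᵀ *ᵥ (Rm⁻¹ *ᵥ em))) ⬝ᵥ (Lmᵀ *ᵥ (Rm⁻¹ *ᵥ em)) =
        em ⬝ᵥ ((Rm⁻¹ * Lm * P' * Lmᵀ * Rm⁻¹) *ᵥ em) := by
      calc (P' *ᵥ (Lmᵀ *ᵥ (Rm⁻¹ *ᵥ em))) ⬝ᵥ (Lmᵀ *ᵥ (Rm⁻¹ *ᵥ em))
          = (Lmᵀ *ᵥ (Rm⁻¹ *ᵥ em)) ⬝ᵥ (P' *ᵥ (Lmᵀ *ᵥ (Rm⁻¹ *ᵥ em))) := dotProduct_comm _ _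
        _ = (Rm⁻¹ *ᵥ em) ⬝ᵥ (Lmᵀᵀ *ᵥ (P' *ᵥ (Lmᵀ *ᵥ (Rm⁻¹ *ᵥ em)))) := dot_shift' _ _ _
        _ = em ⬝ᵥ ((Rm⁻¹)ᵀ *ᵥ (Lmᵀᵀ *ᵥ (P' *ᵥ (Lmᵀ *ᵥ (Rm⁻¹ *ᵥ em))))) := dot_shift' _ _ _
        _ = em ⬝ᵥ ((Rm⁻¹ * Lm * P' * Lmᵀ * Rm⁻¹) *ᵥ em) := by
            rw [hRis, transpose_transpose]
            simp only [Matrix.mulVec_mulVec, Matrix.mul_assoc]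
    rw [e1, hX, Matrix.sub_mulVec, dotProduct_sub]
  have hD : em ⬝ᵥ (((Lm * Pm * Lmᵀ + Rm)⁻¹ - (Fm - 1) * Rm⁻¹ * (Fm - 1)) *ᵥ em) =
      em ⬝ᵥ ((Lm * Pm * Lmᵀ + Rm)⁻¹ *ᵥ em) -
        ((Fm *ᵥ em) ⬝ᵥ (Rm⁻¹ *ᵥ (Fm *ᵥ em)) - 2 * ((Fm *ᵥ em) ⬝ᵥ (Rm⁻¹ *ᵥ em)) +
          em ⬝ᵥ (Rm⁻¹ *ᵥ em)) := by
    rw [Matrix.sub_mulVec, dotProduct_sub]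
    congr 1
    have h5 : (Fm - 1) *ᵥ em = Fm *ᵥ em - em := by rw [Matrix.sub_mulVec, Matrix.one_mulVec]
    rw [← Matrix.mulVec_mulVec, ← Matrix.mulVec_mulVec, h5, dot_shift, Matrix.transpose_sub,
      hFs', Matrix.transpose_one, h5]
    rw [Matrix.mulVec_sub, sub_dotProduct, dotProduct_sub, dotProduct_sub]
    have h6 : em ⬝ᵥ (Rm⁻¹ *ᵥ (Fm *ᵥ em)) = (Fm *ᵥ em) ⬝ᵥ (Rm⁻¹ *ᵥ em) := by
      rw [dot_shift, hRis, dotProduct_comm]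
    rw [h6]; ring
  have hL1e : 0 ≤ em ⬝ᵥ (((Lm * Pm * Lmᵀ + Rm)⁻¹ - (Fm - 1) * Rm⁻¹ * (Fm - 1)) *ᵥ em) :=
    psd_apply hL1 em
  have master : θ1 ⬝ᵥ (P'⁻¹ *ᵥ θ1) = (Gm *ᵥ θ0) ⬝ᵥ (Pm⁻¹ *ᵥ (Gm *ᵥ θ0)) -
      em ⬝ᵥ (((Lm * Pm * Lmᵀ + Rm)⁻¹ - (Fm - 1) * Rm⁻¹ * (Fm - 1)) *ᵥ em) := by
    rw [h2, hθ1]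
    simp only [sub_dotProduct, dotProduct_sub]
    rw [hT1, hT2, hT3, hT4, hD]
    ring
  have hGstep : (Gm *ᵥ θ0) ⬝ᵥ (Pm⁻¹ *ᵥ (Gm *ᵥ θ0)) ≤ θ0 ⬝ᵥ (Pm⁻¹ *ᵥ θ0) := by
    have h0 := psd_apply hL2 θ0
    have h7 : θ0 ⬝ᵥ ((Gmᵀ * Pm⁻¹ * Gm) *ᵥ θ0) = (Gm *ᵥ θ0) ⬝ᵥ (Pm⁻¹ *ᵥ (Gm *ᵥ θ0)) := by
      rw [← Matrix.mulVec_mulVec, ← Matrix.mulVec_mulVec, dot_shift, transpose_transpose]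
    rw [Matrix.sub_mulVec, dotProduct_sub, h7] at h0
    linarith
  linarith [master, hL1e, hGstep]

open scoped MatrixOrder in
lemma inv_quad_bound {n : ℕ} {Pm : Matrix (Fin n) (Fin n) ℝ} (hP : Pm.PosDef) {β : ℝ}
    (hβ : (β • (1 : Matrix (Fin n) (Fin n) ℝ) - Pm).PosSemidef) (x : Fin n → ℝ) :
    x ⬝ᵥ x ≤ β * (x ⬝ᵥ (Pm⁻¹ *ᵥ x)) := by
  set Q := CFC.sqrt Pm with hQ
  have hQherm : Qᴴ = Q := (CFC.sqrt_nonneg Pm).posSemidef.isHermitian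
  have hQQ : Q * Q = Pm := CFC.sqrt_mul_sqrt_self Pm hP.posSemidef.nonneg
  have h1 : (Qᴴ * (β • 1 - Pm) * Q).PosSemidef := hβ.conjTranspose_mul_mul_same Q
  have h2 : Qᴴ * (β • 1 - Pm) * Q = β • Pm - Pm * Pm := by
    rw [hQherm, ← hQQ]
    simp only [Matrix.mul_sub, Matrix.sub_mul, Matrix.mul_smul, Matrix.smul_mul,
      Matrix.mul_one, Matrix.mul_assoc]
  rw [h2] at h1
  have hdet : IsUnit Pm.det := hP.det_pos.ne'.isUnit
  have hPx : Pm *ᵥ (Pm⁻¹ *ᵥ x) = x := by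
    rw [Matrix.mulVec_mulVec, Matrix.mul_nonsing_inv _ hdet, Matrix.one_mulVec]
  have hPs : Pmᵀ = Pm := by
    rw [← conjTranspose_eq_transpose_of_trivial]; exact hP.isHermitian
  have h4 := psd_apply h1 (Pm⁻¹ *ᵥ x)
  rw [Matrix.sub_mulVec, dotProduct_sub, Matrix.smul_mulVec, dotProduct_smul,
    smul_eq_mul, hPx] at h4
  have h5 : (Pm⁻¹ *ᵥ x) ⬝ᵥ ((Pm * Pm) *ᵥ (Pm⁻¹ *ᵥ x)) = x ⬝ᵥ x := by
    rw [← Matrix.mulVec_mulVec, hPx, dot_shift, hPs, hPx]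
  have h6 : (Pm⁻¹ *ᵥ x) ⬝ᵥ x = x ⬝ᵥ (Pm⁻¹ *ᵥ x) := dotProduct_comm _ _
  rw [h5, h6] at h4
  linarith

/-- The EKF Lyapunov sequence `V_t := θ̃_tᵀ P_t⁻¹ θ̃_t` is nonincreasing under the Loewner
conditions, and if `P_t ≼ β I` for all `t` then `‖θ̃_t‖² ≤ β V_0`.
(Quantities at time `t ≥ 1` are indexed with argument `t+1`, `t : ℕ`.) -/
theorem ekf_lyapunov_sequence_nonincreasing
    (p r : ℕ) (hp : 0 < p) (hr : 0 < r)
    (R : ℕ → Matrix (Fin r) (Fin r) ℝ) (L : ℕ → Matrix (Fin r) (Fin p) ℝ)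
    (F : ℕ → Matrix (Fin r) (Fin r) ℝ) (G : ℕ → Matrix (Fin p) (Fin p) ℝ)
    (hRpos : ∀ t : ℕ, (R (t + 1)).PosDef)
    (hRsymm : ∀ t : ℕ, (R (t + 1)).IsSymm)
    (hFsymm : ∀ t : ℕ, (F (t + 1)).IsSymm)
    (P : ℕ → Matrix (Fin p) (Fin p) ℝ)
    (hP0 : (P 0).PosDef)
    (hPrec : ∀ t : ℕ,
      P (t + 1) =
        (1 - (P t * (L (t + 1))ᵀ * (L (t + 1) * P t * (L (t + 1))ᵀ + R (t + 1))⁻¹) * L (t + 1)) *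
          P t)
    (hPpos : ∀ t : ℕ, (P t).PosDef)
    (hPinv : ∀ t : ℕ,
      (P (t + 1))⁻¹ = (P t)⁻¹ + (L (t + 1))ᵀ * (R (t + 1))⁻¹ * L (t + 1))
    (θ : ℕ → Fin p → ℝ) (e : ℕ → Fin r → ℝ)
    (hθ : ∀ t : ℕ,
      θ (t + 1) = G (t + 1) *ᵥ θ t - (P (t + 1) * (L (t + 1))ᵀ * (R (t + 1))⁻¹) *ᵥ e (t + 1))
    (hFe : ∀ t : ℕ, F (t + 1) *ᵥ e (t + 1) = L (t + 1) *ᵥ (G (t + 1) *ᵥ θ t))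
    (hLoew1 : ∀ t : ℕ,
      ((L (t + 1) * P t * (L (t + 1))ᵀ + R (t + 1))⁻¹ -
        (F (t + 1) - 1) * (R (t + 1))⁻¹ * (F (t + 1) - 1)).PosSemidef)
    (hLoew2 : ∀ t : ℕ, ((P t)⁻¹ - (G (t + 1))ᵀ * (P t)⁻¹ * G (t + 1)).PosSemidef) :
    (Antitone fun t : ℕ => θ t ⬝ᵥ ((P t)⁻¹ *ᵥ θ t)) ∧
      ∀ β : ℝ, 0 < β → (∀ t : ℕ, (β • (1 : Matrix (Fin p) (Fin p) ℝ) - P t).PosSemidef) →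
        ∀ t : ℕ, θ t ⬝ᵥ θ t ≤ β * (θ 0 ⬝ᵥ ((P 0)⁻¹ *ᵥ θ 0)) := by
  have hA : Antitone fun t : ℕ => θ t ⬝ᵥ ((P t)⁻¹ *ᵥ θ t) := by
    apply antitone_nat_of_succ_le
    intro t
    exact ekf_step (R (t + 1)) (L (t + 1)) (F (t + 1)) (G (t + 1)) (P t) (P (t + 1))
      (hRpos t) (hRsymm t) (hFsymm t) (hPpos t) (hPpos (t + 1)) (hPinv t)
      (θ t) (θ (t + 1)) (e (t + 1)) (hθ t) (hFe t) (hLoew1 t) (hLoew2 t)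
  refine ⟨hA, fun β hβ hβI t => ?_⟩
  have h1 : θ t ⬝ᵥ θ t ≤ β * (θ t ⬝ᵥ ((P t)⁻¹ *ᵥ θ t)) :=
    inv_quad_bound (hPpos t) (hβI t) (θ t)
  have h2 : θ t ⬝ᵥ ((P t)⁻¹ *ᵥ θ t) ≤ θ 0 ⬝ᵥ ((P 0)⁻¹ *ᵥ θ 0) := hA (Nat.zero_le t)
  exact h1.trans (mul_le_mul_of_nonneg_left h2 hβ.le)
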